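/- arXiv:1006.1594 — 3 statements merged into one kernel-verified Lean document; each statement's English description precedes it below -/
import Mathlib

section
/- Let η be a real symmetric 3×3 positive semidefinite matrix with diagonal entries a, b, c and off-diagonal entries d, e, f (so η = [[a,d,e],[d,b,f],[e,f,c]]). Then the matrix η̃ = [[a,|d|,|e|],[|d|,b,|f|],[|e|,|f|,c]] obtained by taking absolute values of the off-diagonal entries is also positive semidefinite. -/
/-- Auxiliary: if the quadratic form with cross coefficients (d,e,f) is PSD, with
d,e ≥ 0 and f ≤ 0, then the form with coefficients (d,e,-f) is nonnegative. -/
lemma aux_stmt0 (a b c d e f u v w : ℝ) (hd : 0 ≤ d) (he : 0 ≤ e) (hf : f ≤ 0)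
    (key : ∀ u v w : ℝ,
      0 ≤ a*u^2 + b*v^2 + c*w^2 + 2*d*u*v + 2*e*u*w + 2*f*v*w) :
    0 ≤ a*u^2 + b*v^2 + c*w^2 + 2*d*u*v + 2*e*u*w - 2*f*v*w := by
  have k1 := key u v w
  have k2 := key u v (-w)
  have k3 := key u (-v) w
  have k4 := key u (-v) (-w)
  rcases le_or_gt 0 (v*w) with h23 | h23
  · nlinarith [k1]
  · rcases le_or_gt 0 (u*w) with h13 | h13
    · nlinarith [k2]
    · rcases le_or_gt 0 (u*v) with h12 | h12
      · nlinarith [k3]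
      · nlinarith [k1, sq_nonneg u, mul_pos (neg_pos.2 h12) (neg_pos.2 h13)]

/-- If the real symmetric 3×3 matrix η = [[a,d,e],[d,b,f],[e,f,c]] is
positive semidefinite, then so is the matrix obtained by replacing the off-diagonal
entries with their absolute values. -/
theorem stmt_0 (a b c d e f : ℝ)
    (h : Matrix.PosSemidef !![a, d, e; d, b, f; e, f, c]) :
    Matrix.PosSemidef !![a, |d|, |e|; |d|, b, |f|; |e|, |f|, c] := by
  have key : ∀ u v w : ℝ,
      0 ≤ a*u^2 + b*v^2 + c*w^2 + 2*d*u*v + 2*e*u*w + 2*f*v*w := by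
    intro u v w
    have := h.dotProduct_mulVec_nonneg ![u, v, w]
    simp [Matrix.mulVec, dotProduct, Fin.sum_univ_three] at this
    nlinarith [this]
  refine Matrix.PosSemidef.of_dotProduct_mulVec_nonneg ?_ ?_
  · ext i j
    fin_cases i <;> fin_cases j <;> simp
  · intro x
    set u := x 0 with hu
    set v := x 1 with hv
    set w := x 2 with hw
    have goal2 : 0 ≤ a*u^2 + b*v^2 + c*w^2 + 2*(|d|)*u*v + 2*(|e|)*u*w + 2*(|f|)*v*w := by
      rcases abs_cases d with ⟨hd, hd'⟩ | ⟨hd, hd'⟩ <;>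
      rcases abs_cases e with ⟨he, he'⟩ | ⟨he, he'⟩ <;>
      rcases abs_cases f with ⟨hf, hf'⟩ | ⟨hf, hf'⟩ <;>
      rw [hd, he, hf]
      -- (+,+,+)
      · nlinarith [key u v w]
      -- (+,+,-) : f < 0, flipped slot is vw
      · nlinarith [aux_stmt0 a b c d e f u v w hd' he' hf'.le key]
      -- (+,-,+) : e < 0, move e to the vw slot via (u,v,w) ↦ (v,u,w)
      · nlinarith [aux_stmt0 b a c d f e v u w hd' hf' he'.le
          (fun p q r => by nlinarith [key q p r])]
      -- (+,-,-)
      · nlinarith [key u v (-w)]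
      -- (-,+,+) : d < 0, move d to the vw slot via (u,v,w) ↦ (w,v,u)
      · nlinarith [aux_stmt0 c b a f e d w v u hf' he' hd'.le
          (fun p q r => by nlinarith [key r q p])]
      -- (-,+,-)
      · nlinarith [key u (-v) w]
      -- (-,-,+)
      · nlinarith [key u (-v) (-w)]
      -- (-,-,-) : flip to (+,+,-) and use aux
      · nlinarith [aux_stmt0 a b c (-d) (-e) f u v w (by linarith) (by linarith) hf'.le
          (fun p q r => by nlinarith [key p (-q) (-r)])]
    simp [Matrix.mulVec, dotProduct, Fin.sum_univ_three, ← hu, ← hv, ← hw]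
    nlinarith [goal2]
end

section
/- If ρ is a fully separable tripartite state, i.e. ρ = Σ_k p_k |φ_A^(k)⟩⟨φ_A^(k)| ⊗ |φ_B^(k)⟩⟨φ_B^(k)| ⊗ |φ_C^(k)⟩⟨φ_C^(k)|, then there exist matrices κ_A = Σ_k p_k γ(|φ_A^(k)⟩⟨φ_A^(k)|), κ_B, κ_C (defined analogously) such that the block covariance matrix of ρ with local observables satisfies γ(ρ) ≥ κ_A ⊕ κ_B ⊕ κ_C (the difference is positive semidefinite). -/
open Matrix ComplexOrder Kronecker

/-- Covariance matrix of a state `σ` with respect to observables `M`. -/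
noncomputable def covMat {d ι : Type*} [Fintype d] [DecidableEq d] [Fintype ι]
    (σ : Matrix d d ℂ) (M : ι → Matrix d d ℂ) : Matrix ι ι ℝ :=
  Matrix.of fun i j =>
    ((1 / 2 : ℂ) * (σ * (M i * M j + M j * M i)).trace).re
      - ((σ * M i).trace).re * ((σ * M j).trace).re


private lemma pure_herm {d : ℕ} (φ : Fin d → ℂ) : (vecMulVec φ (star φ)).IsHermitian := by
  ext i j
  simp [Matrix.conjTranspose_apply, Matrix.vecMulVec_apply, mul_comm]

private lemma pure_trace {d : ℕ} (φ : Fin d → ℂ) (h : ∑ i, Complex.normSq (φ i) = 1) :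
    (vecMulVec φ (star φ)).trace = 1 := by
  have : (vecMulVec φ (star φ)).trace = ((∑ i, Complex.normSq (φ i) : ℝ) : ℂ) := by
    simp [Matrix.trace, Matrix.diag, Matrix.vecMulVec_apply, Complex.mul_conj]
  rw [this, h, Complex.ofReal_one]

private lemma trace_real {d : ℕ} {σ H : Matrix (Fin d) (Fin d) ℂ} (hσ : σ.IsHermitian)
    (hH : H.IsHermitian) : (σ * H).trace = (((σ * H).trace).re : ℂ) := by
  have : (starRingEnd ℂ) (σ * H).trace = (σ * H).trace := by
    have := Matrix.trace_conjTranspose (σ * H)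
    rw [Matrix.conjTranspose_mul, hσ.eq, hH.eq] at this
    calc (starRingEnd ℂ) (σ * H).trace = star (σ * H).trace := rfl
      _ = (H * σ).trace := this.symm
      _ = (σ * H).trace := Matrix.trace_mul_comm _ _
  exact (Complex.conj_eq_iff_re.mp this).symm

private lemma psd_sum_vmv {m : Type*} [Fintype m] {n : ℕ} (p : Fin n → ℝ)
    (hp : ∀ k, 0 ≤ p k) (u : Fin n → m → ℝ) :
    (∑ k, p k • vecMulVec (u k) (u k)).PosSemidef := by
  have hM : ∀ i j, (∑ k, p k • vecMulVec (u k) (u k)) i j = ∑ k, p k * (u k i * u k j) := by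
    intro i j; simp [Matrix.sum_apply, Matrix.vecMulVec_apply]
  refine Matrix.posSemidef_iff_dotProduct_mulVec.mpr ⟨?_, ?_⟩
  · ext i j
    rw [Matrix.conjTranspose_apply, hM, hM]
    simp only [star_trivial]
    exact Finset.sum_congr rfl fun k _ => by ring
  · intro x
    simp only [star_trivial, dotProduct, Matrix.mulVec, hM]
    have key : (∑ i, x i * ∑ j, (∑ k, p k * (u k i * u k j)) * x j)
        = ∑ k, p k * (∑ i, x i * u k i) ^ 2 := by
      calc (∑ i, x i * ∑ j, (∑ k, p k * (u k i * u k j)) * x j)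
          = ∑ i, ∑ j, ∑ k, p k * ((x i * u k i) * (x j * u k j)) := by
            refine Finset.sum_congr rfl fun i _ => ?_
            rw [Finset.mul_sum]
            refine Finset.sum_congr rfl fun j _ => ?_
            rw [Finset.sum_mul, Finset.mul_sum]
            exact Finset.sum_congr rfl fun k _ => by ring
        _ = ∑ i, ∑ k, ∑ j, p k * ((x i * u k i) * (x j * u k j)) :=
            Finset.sum_congr rfl fun i _ => Finset.sum_comm
        _ = ∑ k, ∑ i, ∑ j, p k * ((x i * u k i) * (x j * u k j)) := Finset.sum_comm
        _ = ∑ k, p k * (∑ i, x i * u k i) ^ 2 := by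
            refine Finset.sum_congr rfl fun k _ => ?_
            rw [sq, Finset.sum_mul_sum, Finset.mul_sum]
            refine Finset.sum_congr rfl fun i _ => ?_
            rw [Finset.mul_sum]
    rw [key]
    exact Finset.sum_nonneg fun k _ => mul_nonneg (hp k) (sq_nonneg _)

private lemma mix_aux {n : ℕ} (p : Fin n → ℝ) (hpsum : ∑ k, p k = 1) (a b : Fin n → ℝ) :
    (∑ k, p k * (a k * b k)) - (∑ k, p k * a k) * (∑ k, p k * b k)
      = ∑ k, p k * ((a k - ∑ l, p l * a l) * (b k - ∑ l, p l * b l)) := by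
  have h : ∀ k, p k * ((a k - ∑ l, p l * a l) * (b k - ∑ l, p l * b l))
      = p k * (a k * b k) - (p k * a k) * (∑ l, p l * b l)
        - ((∑ l, p l * a l) * (p k * b k) - p k * ((∑ l, p l * a l) * (∑ l, p l * b l))) := by
    intro k; ring
  rw [Finset.sum_congr rfl fun k _ => h k, Finset.sum_sub_distrib, Finset.sum_sub_distrib,
      Finset.sum_sub_distrib, ← Finset.sum_mul, ← Finset.mul_sum, ← Finset.sum_mul, hpsum, one_mul]
  ring

/-- Tripartite CMC: for a fully separable state
ρ = Σ_k p_k |φ_A^(k)⟩⟨φ_A^(k)| ⊗ |φ_B^(k)⟩⟨φ_B^(k)| ⊗ |φ_C^(k)⟩⟨φ_C^(k)|,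
the block covariance matrix with local observables satisfies
γ(ρ) ≥ κ_A ⊕ κ_B ⊕ κ_C, where κ_X = Σ_k p_k γ(|φ_X^(k)⟩⟨φ_X^(k)|). -/
theorem stmt_7 (dA dB dC nA nB nC n : ℕ)
    (p : Fin n → ℝ) (hp : ∀ k, 0 ≤ p k) (hpsum : ∑ k, p k = 1)
    (φA : Fin n → Fin dA → ℂ) (φB : Fin n → Fin dB → ℂ) (φC : Fin n → Fin dC → ℂ)
    (hφA : ∀ k, ∑ i, Complex.normSq (φA k i) = 1)
    (hφB : ∀ k, ∑ i, Complex.normSq (φB k i) = 1)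
    (hφC : ∀ k, ∑ i, Complex.normSq (φC k i) = 1)
    (A : Fin nA → Matrix (Fin dA) (Fin dA) ℂ)
    (B : Fin nB → Matrix (Fin dB) (Fin dB) ℂ)
    (C : Fin nC → Matrix (Fin dC) (Fin dC) ℂ)
    (hA : ∀ i, (A i).IsHermitian) (hB : ∀ i, (B i).IsHermitian)
    (hC : ∀ i, (C i).IsHermitian)
    (ρ : Matrix ((Fin dA × Fin dB) × Fin dC) ((Fin dA × Fin dB) × Fin dC) ℂ)
    (hρ : ρ = ∑ k, p k •
      ((vecMulVec (φA k) (star (φA k)) ⊗ₖ vecMulVec (φB k) (star (φB k)))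
        ⊗ₖ vecMulVec (φC k) (star (φC k))))
    (obs : (Fin nA ⊕ (Fin nB ⊕ Fin nC)) →
      Matrix ((Fin dA × Fin dB) × Fin dC) ((Fin dA × Fin dB) × Fin dC) ℂ)
    (hobs : obs = Sum.elim
      (fun i => (A i ⊗ₖ (1 : Matrix (Fin dB) (Fin dB) ℂ)) ⊗ₖ (1 : Matrix (Fin dC) (Fin dC) ℂ))
      (Sum.elim
        (fun i => ((1 : Matrix (Fin dA) (Fin dA) ℂ) ⊗ₖ B i) ⊗ₖ (1 : Matrix (Fin dC) (Fin dC) ℂ))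
        (fun i => ((1 : Matrix (Fin dA) (Fin dA) ℂ) ⊗ₖ (1 : Matrix (Fin dB) (Fin dB) ℂ)) ⊗ₖ C i)))
    (κA : Matrix (Fin nA) (Fin nA) ℝ) (κB : Matrix (Fin nB) (Fin nB) ℝ)
    (κC : Matrix (Fin nC) (Fin nC) ℝ)
    (hκA : κA = ∑ k, p k • covMat (vecMulVec (φA k) (star (φA k))) A)
    (hκB : κB = ∑ k, p k • covMat (vecMulVec (φB k) (star (φB k))) B)
    (hκC : κC = ∑ k, p k • covMat (vecMulVec (φC k) (star (φC k))) C) :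
    (covMat ρ obs - Matrix.fromBlocks κA 0 0 (Matrix.fromBlocks κB 0 0 κC)).PosSemidef := by
  classical
  -- expectation values of the local observables in the pure local states
  set v : Fin n → (Fin nA ⊕ (Fin nB ⊕ Fin nC)) → ℝ := fun k =>
    Sum.elim (fun i => ((vecMulVec (φA k) (star (φA k)) * A i).trace).re)
      (Sum.elim (fun i => ((vecMulVec (φB k) (star (φB k)) * B i).trace).re)
        (fun i => ((vecMulVec (φC k) (star (φC k)) * C i).trace).re)) with hv
  have key : ∀ (XA : Matrix (Fin dA) (Fin dA) ℂ) (XB : Matrix (Fin dB) (Fin dB) ℂ)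
      (XC : Matrix (Fin dC) (Fin dC) ℂ),
      (ρ * ((XA ⊗ₖ XB) ⊗ₖ XC)).trace
        = ∑ k, (p k : ℂ) * ((vecMulVec (φA k) (star (φA k)) * XA).trace *
            ((vecMulVec (φB k) (star (φB k)) * XB).trace *
              (vecMulVec (φC k) (star (φC k)) * XC).trace)) := by
    intro XA XB XC
    rw [hρ, Finset.sum_mul, Matrix.trace_sum]
    refine Finset.sum_congr rfl fun k _ => ?_
    rw [smul_mul_assoc, Matrix.trace_smul, ← Matrix.mul_kronecker_mul,
        ← Matrix.mul_kronecker_mul, Matrix.trace_kronecker, Matrix.trace_kronecker]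
    rw [Complex.real_smul, mul_assoc]
  have keyre : ∀ (XA : Matrix (Fin dA) (Fin dA) ℂ) (XB : Matrix (Fin dB) (Fin dB) ℂ)
      (XC : Matrix (Fin dC) (Fin dC) ℂ),
      ((ρ * ((XA ⊗ₖ XB) ⊗ₖ XC)).trace).re
        = ∑ k, p k * ((vecMulVec (φA k) (star (φA k)) * XA).trace *
            ((vecMulVec (φB k) (star (φB k)) * XB).trace *
              (vecMulVec (φC k) (star (φC k)) * XC).trace)).re := by
    intro XA XB XC
    rw [key, Complex.re_sum]
    exact Finset.sum_congr rfl fun k _ => Complex.re_ofReal_mul _ _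
  have hexp : ∀ i, ((ρ * obs i).trace).re = ∑ k, p k * v k i := by
    intro i
    rcases i with iA | iB | iC
    · rw [hobs, Sum.elim_inl, keyre]
      refine Finset.sum_congr rfl fun k _ => ?_
      rw [Matrix.mul_one, Matrix.mul_one, pure_trace _ (hφB k), pure_trace _ (hφC k)]
      simp [hv]
    · rw [hobs, Sum.elim_inr, Sum.elim_inl, keyre]
      refine Finset.sum_congr rfl fun k _ => ?_
      rw [Matrix.mul_one, Matrix.mul_one, pure_trace _ (hφA k), pure_trace _ (hφC k)]
      simp [hv]
    · rw [hobs, Sum.elim_inr, Sum.elim_inr, keyre]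
      refine Finset.sum_congr rfl fun k _ => ?_
      rw [Matrix.mul_one, Matrix.mul_one, pure_trace _ (hφA k), pure_trace _ (hφB k)]
      simp [hv]
  have half : ∀ z : ℂ, (1 / 2 : ℂ) * (z + z) = z := fun z => by ring
  -- the nine entries
  have entry : ∀ i j, (covMat ρ obs - Matrix.fromBlocks κA 0 0 (Matrix.fromBlocks κB 0 0 κC)) i j
      = ∑ k, p k * ((v k i - ∑ l, p l * v l i) * (v k j - ∑ l, p l * v l j)) := by
    intro i j
    rw [Matrix.sub_apply]
    rw [show covMat ρ obs i j
        = ((1 / 2 : ℂ) * (ρ * (obs i * obs j + obs j * obs i)).trace).re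
          - ((ρ * obs i).trace).re * ((ρ * obs j).trace).re from rfl]
    rw [hexp i, hexp j, ← mix_aux p hpsum (fun k => v k i) (fun k => v k j)]
    rcases i with iA | iB | iC <;> rcases j with jA | jB | jC
    · -- A-A block
      rw [hobs]; simp only [Sum.elim_inl]
      rw [← Matrix.mul_kronecker_mul, ← Matrix.mul_kronecker_mul, ← Matrix.mul_kronecker_mul,
          ← Matrix.mul_kronecker_mul]
      simp only [Matrix.mul_one, Matrix.one_mul]
      rw [← Matrix.add_kronecker, ← Matrix.add_kronecker, key, Finset.mul_sum, Complex.re_sum,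
          Matrix.fromBlocks_apply₁₁, hκA, Matrix.sum_apply, sub_right_comm,
          ← Finset.sum_sub_distrib]
      congr 1
      refine Finset.sum_congr rfl fun k _ => ?_
      rw [Matrix.mul_one, Matrix.mul_one, pure_trace _ (hφB k), pure_trace _ (hφC k),
          one_mul, mul_one, mul_left_comm, Complex.re_ofReal_mul]
      simp only [hv, Matrix.smul_apply, smul_eq_mul, covMat, Matrix.of_apply, Sum.elim_inl]
      try ring
    · -- cross block
      rw [hobs]; simp only [Sum.elim_inl, Sum.elim_inr]
      rw [← Matrix.mul_kronecker_mul, ← Matrix.mul_kronecker_mul, ← Matrix.mul_kronecker_mul,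
          ← Matrix.mul_kronecker_mul]
      simp only [Matrix.mul_one, Matrix.one_mul]
      rw [Matrix.fromBlocks_apply₁₂]
      simp only [Matrix.zero_apply, sub_zero]
      rw [Matrix.mul_add, Matrix.trace_add, half, keyre]
      congr 1
      refine Finset.sum_congr rfl fun k _ => ?_
      rw [Matrix.mul_one, pure_trace _ (hφC k), mul_one, trace_real (pure_herm (φA k)) (hA iA), trace_real (pure_herm (φB k)) (hB jB),
          ← Complex.ofReal_mul, Complex.ofReal_re]
      simp only [hv, Sum.elim_inl, Sum.elim_inr]
      try ring
    · -- cross block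
      rw [hobs]; simp only [Sum.elim_inl, Sum.elim_inr]
      rw [← Matrix.mul_kronecker_mul, ← Matrix.mul_kronecker_mul, ← Matrix.mul_kronecker_mul,
          ← Matrix.mul_kronecker_mul]
      simp only [Matrix.mul_one, Matrix.one_mul]
      rw [Matrix.fromBlocks_apply₁₂]
      simp only [Matrix.zero_apply, sub_zero]
      rw [Matrix.mul_add, Matrix.trace_add, half, keyre]
      congr 1
      refine Finset.sum_congr rfl fun k _ => ?_
      rw [Matrix.mul_one, pure_trace _ (hφB k), one_mul, trace_real (pure_herm (φA k)) (hA iA), trace_real (pure_herm (φC k)) (hC jC),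
          ← Complex.ofReal_mul, Complex.ofReal_re]
      simp only [hv, Sum.elim_inl, Sum.elim_inr]
      try ring
    · -- cross block
      rw [hobs]; simp only [Sum.elim_inl, Sum.elim_inr]
      rw [← Matrix.mul_kronecker_mul, ← Matrix.mul_kronecker_mul, ← Matrix.mul_kronecker_mul,
          ← Matrix.mul_kronecker_mul]
      simp only [Matrix.mul_one, Matrix.one_mul]
      rw [Matrix.fromBlocks_apply₂₁]
      simp only [Matrix.zero_apply, sub_zero]
      rw [Matrix.mul_add, Matrix.trace_add, half, keyre]
      congr 1
      refine Finset.sum_congr rfl fun k _ => ?_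
      rw [Matrix.mul_one, pure_trace _ (hφC k), mul_one, trace_real (pure_herm (φA k)) (hA jA), trace_real (pure_herm (φB k)) (hB iB),
          ← Complex.ofReal_mul, Complex.ofReal_re]
      simp only [hv, Sum.elim_inl, Sum.elim_inr]
      try ring
    · -- B-B block
      rw [hobs]; simp only [Sum.elim_inr, Sum.elim_inl]
      rw [← Matrix.mul_kronecker_mul, ← Matrix.mul_kronecker_mul, ← Matrix.mul_kronecker_mul,
          ← Matrix.mul_kronecker_mul]
      simp only [Matrix.mul_one, Matrix.one_mul]
      rw [← Matrix.add_kronecker, ← Matrix.kronecker_add, key, Finset.mul_sum, Complex.re_sum,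
          Matrix.fromBlocks_apply₂₂, Matrix.fromBlocks_apply₁₁, hκB, Matrix.sum_apply,
          sub_right_comm, ← Finset.sum_sub_distrib]
      congr 1
      refine Finset.sum_congr rfl fun k _ => ?_
      rw [Matrix.mul_one, Matrix.mul_one, pure_trace _ (hφA k), pure_trace _ (hφC k),
          one_mul, mul_one, mul_left_comm, Complex.re_ofReal_mul]
      simp only [hv, Matrix.smul_apply, smul_eq_mul, covMat, Matrix.of_apply, Sum.elim_inr,
        Sum.elim_inl]
      try ring
    · -- cross block
      rw [hobs]; simp only [Sum.elim_inl, Sum.elim_inr]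
      rw [← Matrix.mul_kronecker_mul, ← Matrix.mul_kronecker_mul, ← Matrix.mul_kronecker_mul,
          ← Matrix.mul_kronecker_mul]
      simp only [Matrix.mul_one, Matrix.one_mul]
      rw [Matrix.fromBlocks_apply₂₂, Matrix.fromBlocks_apply₁₂]
      simp only [Matrix.zero_apply, sub_zero]
      rw [Matrix.mul_add, Matrix.trace_add, half, keyre]
      congr 1
      refine Finset.sum_congr rfl fun k _ => ?_
      rw [Matrix.mul_one, pure_trace _ (hφA k), one_mul, trace_real (pure_herm (φB k)) (hB iB), trace_real (pure_herm (φC k)) (hC jC),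
          ← Complex.ofReal_mul, Complex.ofReal_re]
      simp only [hv, Sum.elim_inl, Sum.elim_inr]
      try ring
    · -- cross block
      rw [hobs]; simp only [Sum.elim_inl, Sum.elim_inr]
      rw [← Matrix.mul_kronecker_mul, ← Matrix.mul_kronecker_mul, ← Matrix.mul_kronecker_mul,
          ← Matrix.mul_kronecker_mul]
      simp only [Matrix.mul_one, Matrix.one_mul]
      rw [Matrix.fromBlocks_apply₂₁]
      simp only [Matrix.zero_apply, sub_zero]
      rw [Matrix.mul_add, Matrix.trace_add, half, keyre]
      congr 1
      refine Finset.sum_congr rfl fun k _ => ?_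
      rw [Matrix.mul_one, pure_trace _ (hφB k), one_mul, trace_real (pure_herm (φA k)) (hA jA), trace_real (pure_herm (φC k)) (hC iC),
          ← Complex.ofReal_mul, Complex.ofReal_re]
      simp only [hv, Sum.elim_inl, Sum.elim_inr]
      try ring
    · -- cross block
      rw [hobs]; simp only [Sum.elim_inl, Sum.elim_inr]
      rw [← Matrix.mul_kronecker_mul, ← Matrix.mul_kronecker_mul, ← Matrix.mul_kronecker_mul,
          ← Matrix.mul_kronecker_mul]
      simp only [Matrix.mul_one, Matrix.one_mul]
      rw [Matrix.fromBlocks_apply₂₂, Matrix.fromBlocks_apply₂₁]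
      simp only [Matrix.zero_apply, sub_zero]
      rw [Matrix.mul_add, Matrix.trace_add, half, keyre]
      congr 1
      refine Finset.sum_congr rfl fun k _ => ?_
      rw [Matrix.mul_one, pure_trace _ (hφA k), one_mul, trace_real (pure_herm (φB k)) (hB jB), trace_real (pure_herm (φC k)) (hC iC),
          ← Complex.ofReal_mul, Complex.ofReal_re]
      simp only [hv, Sum.elim_inl, Sum.elim_inr]
      try ring
    · -- C-C block
      rw [hobs]; simp only [Sum.elim_inr]
      rw [← Matrix.mul_kronecker_mul, ← Matrix.mul_kronecker_mul, ← Matrix.mul_kronecker_mul,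
          ← Matrix.mul_kronecker_mul]
      simp only [Matrix.mul_one, Matrix.one_mul]
      rw [← Matrix.kronecker_add, key, Finset.mul_sum, Complex.re_sum,
          Matrix.fromBlocks_apply₂₂, Matrix.fromBlocks_apply₂₂, hκC, Matrix.sum_apply,
          sub_right_comm, ← Finset.sum_sub_distrib]
      congr 1
      refine Finset.sum_congr rfl fun k _ => ?_
      rw [Matrix.mul_one, Matrix.mul_one, pure_trace _ (hφA k), pure_trace _ (hφB k),
          one_mul, one_mul, mul_left_comm, Complex.re_ofReal_mul]
      simp only [hv, Matrix.smul_apply, smul_eq_mul, covMat, Matrix.of_apply, Sum.elim_inr]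
      try ring
  have hD : covMat ρ obs - Matrix.fromBlocks κA 0 0 (Matrix.fromBlocks κB 0 0 κC)
      = ∑ k, p k • vecMulVec (fun i => v k i - ∑ l, p l * v l i)
          (fun i => v k i - ∑ l, p l * v l i) := by
    ext i j
    rw [entry i j]
    simp [Matrix.sum_apply, Matrix.vecMulVec_apply]
  rw [hD]
  exact psd_sum_vmv p hp _
end

section
/- Let γ be a 9×9 real symmetric matrix in 3×3 block form with blocks A, B, C on the diagonal and off-diagonal blocks D, E, F. Suppose there exist real symmetric matrices κ_A, κ_B, κ_C each of trace d−1 such that γ − κ_A ⊕ κ_B ⊕ κ_C ≥ 0. Then the 3×3 matrix [[Tr(A)−d+1, Σ_i|D_{ii}|, Σ_i|E_{ii}|],[Σ_i|D_{ii}|, Tr(B)−d+1, Σ_i|F_{ii}|],[Σ_i|E_{ii}|, Σ_i|F_{ii}|, Tr(C)−d+1]] is positive semidefinite. -/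
open Matrix

private noncomputable def sgn (a : ℝ) : ℝ := if a < 0 then -1 else 1

private lemma sgn_sq (a : ℝ) : sgn a ^ 2 = 1 := by unfold sgn; split_ifs <;> norm_num

private lemma sgn_abs (a : ℝ) : |sgn a| = 1 := by unfold sgn; split_ifs <;> norm_num

private lemma sgn_mul (a : ℝ) : sgn a * a = |a| := by
  unfold sgn; split_ifs with h
  · rw [abs_of_neg h]; ring
  · rw [abs_of_nonneg (not_lt.mp h)]; ring

lemma sign_choice (x y z : ℝ) (h : 0 ≤ x*y*z) :
    ∃ e1 e2 e3 : ℝ, e1^2 = 1 ∧ e2^2 = 1 ∧ e3^2 = 1 ∧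
      e1*e2*x = |x| ∧ e1*e3*y = |y| ∧ e2*e3*z = |z| := by
  by_cases hx : x = 0
  · exact ⟨sgn y, sgn z, 1, sgn_sq y, sgn_sq z, one_pow 2,
      by simp [hx], by simpa using sgn_mul y, by simpa using sgn_mul z⟩
  by_cases hy : y = 0
  · exact ⟨sgn x, 1, sgn z, sgn_sq x, one_pow 2, sgn_sq z,
      by simpa using sgn_mul x, by simp [hy], by simpa using sgn_mul z⟩
  refine ⟨1, sgn x, sgn y, one_pow 2, sgn_sq x, sgn_sq y,
    by simpa using sgn_mul x, by simpa using sgn_mul y, ?_⟩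
  have hxyne : x*y ≠ 0 := mul_ne_zero hx hy
  have hss : (sgn x * sgn y) * (x*y) = |x*y| := by
    rw [abs_mul, ← sgn_mul x, ← sgn_mul y]; ring
  have habs : |sgn x * sgn y * z| = |z| := by
    rw [abs_mul, abs_mul, sgn_abs, sgn_abs]; ring
  have key : (sgn x * sgn y * z) * |x*y| = x*y*z := by
    rw [← hss]
    linear_combination (sgn y^2 * (x*y*z)) * sgn_sq x + (x*y*z) * sgn_sq y
  have h1 : 0 < |x*y| := abs_pos.mpr hxyne
  have hnn : 0 ≤ sgn x * sgn y * z := by nlinarith [key, h1, h]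
  rw [← habs, abs_of_nonneg hnn]

lemma qform_abs (a b c x y z : ℝ)
    (h : ∀ w1 w2 w3 : ℝ, 0 ≤ a*w1^2 + b*w2^2 + c*w3^2 + 2*x*w1*w2 + 2*y*w1*w3 + 2*z*w2*w3)
    (v1 v2 v3 : ℝ) :
    0 ≤ a*v1^2 + b*v2^2 + c*v3^2 + 2 * |x| * v1 * v2 + 2 * |y| * v1 * v3 + 2 * |z| * v2 * v3 := by
  rcases le_or_gt 0 (x*y*z) with hc | hc
  · obtain ⟨e1, e2, e3, s1, s2, s3, p1, p2, p3⟩ := sign_choice x y z hc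
    have hq := h (e1*v1) (e2*v2) (e3*v3)
    have key : a * (e1*v1)^2 + b * (e2*v2)^2 + c * (e3*v3)^2 + 2*x*(e1*v1)*(e2*v2) +
        2*y*(e1*v1)*(e3*v3) + 2*z*(e2*v2)*(e3*v3)
        = a*v1^2 + b*v2^2 + c*v3^2 + 2 * |x| * v1 * v2 + 2 * |y| * v1 * v3 + 2 * |z| * v2 * v3 := by
      rw [← p1, ← p2, ← p3]
      linear_combination (a*v1^2)*s1 + (b*v2^2)*s2 + (c*v3^2)*s3
    rw [key] at hq; exact hq
  · obtain ⟨e1, e2, e3, s1, s2, s3, p1, p2, p3⟩ :=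
      sign_choice (-x) (-y) (-z) (by nlinarith)
    have hq := h (e1 * |v1|) (e2 * |v2|) (e3 * |v3|)
    have a1 : |v1|^2 = v1^2 := sq_abs v1
    have a2 : |v2|^2 = v2^2 := sq_abs v2
    have a3 : |v3|^2 = v3^2 := sq_abs v3
    have hx : |(-x)| = |x| := abs_neg x
    have hy : |(-y)| = |y| := abs_neg y
    have hz : |(-z)| = |z| := abs_neg z
    have key : a * (e1 * |v1|)^2 + b * (e2 * |v2|)^2 + c * (e3 * |v3|)^2
        + 2*x*(e1 * |v1|)*(e2 * |v2|) + 2*y*(e1 * |v1|)*(e3 * |v3|) + 2*z*(e2 * |v2|)*(e3 * |v3|)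
        = a*v1^2 + b*v2^2 + c*v3^2 - 2 * |x| * (|v1| * |v2|) - 2 * |y| * (|v1| * |v3|)
          - 2 * |z| * (|v2| * |v3|) := by
      rw [← hx, ← hy, ← hz, ← p1, ← p2, ← p3, ← a1, ← a2, ← a3]
      linear_combination (a * |v1|^2) * s1 + (b * |v2|^2) * s2 + (c * |v3|^2) * s3
    rw [key] at hq
    have m1 : -(|v1| * |v2|) ≤ v1 * v2 := by rw [← abs_mul]; exact neg_abs_le _
    have m2 : -(|v1| * |v3|) ≤ v1 * v3 := by rw [← abs_mul]; exact neg_abs_le _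
    have m3 : -(|v2| * |v3|) ≤ v2 * v3 := by rw [← abs_mul]; exact neg_abs_le _
    have q1 : 0 ≤ |x| * (v1*v2 + |v1| * |v2|) := mul_nonneg (abs_nonneg x) (by linarith)
    have q2 : 0 ≤ |y| * (v1*v3 + |v1| * |v3|) := mul_nonneg (abs_nonneg y) (by linarith)
    have q3 : 0 ≤ |z| * (v2*v3 + |v2| * |v3|) := mul_nonneg (abs_nonneg z) (by linarith)
    nlinarith [hq, q1, q2, q3]

/-- Proposition 9: let γ be the 9×9 real symmetric matrix with block
structure [[A,D,E],[Dᵀ,B,F],[Eᵀ,Fᵀ,C]]. If there exist real symmetric κ_A, κ_B, κ_C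
of trace d−1 with γ − κ_A ⊕ κ_B ⊕ κ_C ≥ 0, then the 3×3 matrix
[[Tr(A)−d+1, Σ|D_ii|, Σ|E_ii|],[Σ|D_ii|, Tr(B)−d+1, Σ|F_ii|],[Σ|E_ii|, Σ|F_ii|, Tr(C)−d+1]]
is positive semidefinite. -/
theorem stmt_12 (d : ℝ) (A B C D E F : Matrix (Fin 3) (Fin 3) ℝ)
    (γ : Matrix (Fin 3 ⊕ (Fin 3 ⊕ Fin 3)) (Fin 3 ⊕ (Fin 3 ⊕ Fin 3)) ℝ)
    (hγ : γ = Matrix.fromBlocks A (Matrix.fromCols D E) (Matrix.fromRows Dᵀ Eᵀ)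
      (Matrix.fromBlocks B F Fᵀ C))
    (κA κB κC : Matrix (Fin 3) (Fin 3) ℝ)
    (hκA : κA.IsHermitian) (hκB : κB.IsHermitian) (hκC : κC.IsHermitian)
    (htrA : κA.trace = d - 1) (htrB : κB.trace = d - 1) (htrC : κC.trace = d - 1)
    (hpos : (γ - Matrix.fromBlocks κA 0 0 (Matrix.fromBlocks κB 0 0 κC)).PosSemidef) :
    Matrix.PosSemidef
      !![A.trace - d + 1, ∑ i, |D i i|, ∑ i, |E i i|;
         ∑ i, |D i i|, B.trace - d + 1, ∑ i, |F i i|;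
         ∑ i, |E i i|, ∑ i, |F i i|, C.trace - d + 1] := by
  -- quadratic-form facts for each diagonal index i
  have hQ : ∀ i : Fin 3, ∀ w1 w2 w3 : ℝ,
      0 ≤ (A i i - κA i i)*w1^2 + (B i i - κB i i)*w2^2 + (C i i - κC i i)*w3^2
        + 2*(D i i)*w1*w2 + 2*(E i i)*w1*w3 + 2*(F i i)*w2*w3 := by
    intro i w1 w2 w3
    have hsub := (hpos.submatrix ![Sum.inl i, Sum.inr (Sum.inl i), Sum.inr (Sum.inr i)]).dotProduct_mulVec_nonneg
      ![w1, w2, w3]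
    simp only [hγ, dotProduct, mulVec, Fin.sum_univ_three, submatrix_apply, Matrix.sub_apply,
      Matrix.cons_val_zero, Matrix.cons_val_one, Matrix.head_cons, Matrix.cons_val_two,
      Matrix.tail_cons, fromBlocks_apply₁₁, fromBlocks_apply₁₂, fromBlocks_apply₂₁,
      fromBlocks_apply₂₂, fromCols_apply_inl, fromCols_apply_inr, fromRows_apply_inl,
      fromRows_apply_inr, Matrix.zero_apply, Matrix.transpose_apply, star_trivial] at hsub
    nlinarith [hsub]
  have hN : ∀ i : Fin 3, ∀ w1 w2 w3 : ℝ,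
      0 ≤ (A i i - κA i i)*w1^2 + (B i i - κB i i)*w2^2 + (C i i - κC i i)*w3^2
        + 2 * |D i i| * w1 * w2 + 2 * |E i i| * w1 * w3 + 2 * |F i i| * w2 * w3 :=
    fun i => qform_abs _ _ _ _ _ _ (hQ i)
  have tA : A.trace = A 0 0 + A 1 1 + A 2 2 := by
    simp [Matrix.trace, Fin.sum_univ_three, Matrix.diag]
  have tB : B.trace = B 0 0 + B 1 1 + B 2 2 := by
    simp [Matrix.trace, Fin.sum_univ_three, Matrix.diag]
  have tC : C.trace = C 0 0 + C 1 1 + C 2 2 := by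
    simp [Matrix.trace, Fin.sum_univ_three, Matrix.diag]
  have tkA : κA 0 0 + κA 1 1 + κA 2 2 = d - 1 := by
    simpa [Matrix.trace, Fin.sum_univ_three, Matrix.diag] using htrA
  have tkB : κB 0 0 + κB 1 1 + κB 2 2 = d - 1 := by
    simpa [Matrix.trace, Fin.sum_univ_three, Matrix.diag] using htrB
  have tkC : κC 0 0 + κC 1 1 + κC 2 2 = d - 1 := by
    simpa [Matrix.trace, Fin.sum_univ_three, Matrix.diag] using htrC
  have total : ∀ w1 w2 w3 : ℝ,
      0 ≤ (A.trace - d + 1)*w1^2 + (B.trace - d + 1)*w2^2 + (C.trace - d + 1)*w3^2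
        + 2*(|D 0 0| + |D 1 1| + |D 2 2|)*w1*w2 + 2*(|E 0 0| + |E 1 1| + |E 2 2|)*w1*w3
        + 2*(|F 0 0| + |F 1 1| + |F 2 2|)*w2*w3 := by
    intro w1 w2 w3
    have h0 := hN 0 w1 w2 w3
    have h1 := hN 1 w1 w2 w3
    have h2 := hN 2 w1 w2 w3
    have eA : A.trace - d + 1 = (A 0 0 - κA 0 0) + (A 1 1 - κA 1 1) + (A 2 2 - κA 2 2) := by
      rw [tA]; linear_combination tkA
    have eB : B.trace - d + 1 = (B 0 0 - κB 0 0) + (B 1 1 - κB 1 1) + (B 2 2 - κB 2 2) := by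
      rw [tB]; linear_combination tkB
    have eC : C.trace - d + 1 = (C 0 0 - κC 0 0) + (C 1 1 - κC 1 1) + (C 2 2 - κC 2 2) := by
      rw [tC]; linear_combination tkC
    rw [eA, eB, eC]
    nlinarith [h0, h1, h2]
  refine PosSemidef.of_dotProduct_mulVec_nonneg ?_ ?_
  · rw [Matrix.IsHermitian, conjTranspose_eq_transpose_of_trivial]
    ext i j
    fin_cases i <;> fin_cases j <;> rfl
  · intro w
    simp only [dotProduct, mulVec, Fin.sum_univ_three, Matrix.cons_val_zero, Matrix.cons_val_one,
      Matrix.head_cons, Matrix.cons_val_two, Matrix.tail_cons, star_trivial,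
      Matrix.cons_val', Matrix.empty_val', Matrix.cons_val_fin_one, Matrix.head_fin_const,
      Matrix.of_apply]
    nlinarith [total (w 0) (w 1) (w 2)]
end
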